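/- For every n ≥ 1, the canonical inclusion Δ[n] → IΔ^n is cellular with respect to the set {h^m_0 : Λ[m,0] → Δ[m] | m ≥ 2} of left horn inclusions; in particular it lies in the weakly saturated class generated by the left horn inclusions. -/

import Mathlib

open CategoryTheory CategoryTheory.GrothendieckTopology CategoryTheory.Limits Simplicial SSet Opposite

noncomputable section

namespace BousfieldPaper

/-! ## Basic lifting-property classes of simplicial sets -/

/-- A Kan fibration: a map with the right lifting property against all horn inclusions. -/
def KanFibration {S T : SSet.{0}} (p : S ⟶ T) : Prop :=
  ∀ (n : ℕ) (i : Fin (n + 2)), HasLiftingProperty ((horn (n + 1) i).ι) p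

/-- An acyclic (trivial) Kan fibration: a map with the right lifting property against
all boundary inclusions. -/
def TrivialKanFibration {S T : SSet.{0}} (p : S ⟶ T) : Prop :=
  ∀ n : ℕ, HasLiftingProperty ((boundary n).ι) p

/-- The class of maps with the right lifting property against every map in `T`. -/
def rlpOf {C : Type*} [Category C] (T : MorphismProperty C) : MorphismProperty C :=
  fun _ _ p => ∀ ⦃A B : C⦄ (i : A ⟶ B), T i → HasLiftingProperty i p

/-- The class of maps with the left lifting property against every map in `T`. -/
def llpOf {C : Type*} [Category C] (T : MorphismProperty C) : MorphismProperty C :=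
  fun _ _ i => ∀ ⦃S T' : C⦄ (p : S ⟶ T'), T p → HasLiftingProperty i p

/-- The saturation `llp(rlp(S))` of a class of maps. -/
def saturationOf {C : Type*} [Category C] (S : MorphismProperty C) : MorphismProperty C :=
  llpOf (rlpOf S)

/-- The class of all horn inclusions (up to isomorphism of arrows). -/
def HornClass : MorphismProperty SSet.{0} := fun _ _ f =>
  ∃ (n : ℕ) (i : Fin (n + 2)), Nonempty (Arrow.mk f ≅ Arrow.mk ((horn (n + 1) i).ι))

/-- The class of left horn inclusions `Λ[n,0] → Δ[n]`, `n ≥ 2` (up to isomorphism of arrows). -/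
def LeftHornClass : MorphismProperty SSet.{0} := fun _ _ f =>
  ∃ n : ℕ, 2 ≤ n ∧ Nonempty (Arrow.mk f ≅ Arrow.mk ((horn n 0).ι))

/-- Anodyne maps: the saturation of the class of horn inclusions. -/
def Anodyne : MorphismProperty SSet.{0} := saturationOf HornClass

/-- A weak homotopy equivalence of simplicial sets (in the Kan--Quillen sense):
a map admitting a factorization as an anodyne map followed by an acyclic Kan fibration. -/
def WeakHomotopyEquivalence {S T : SSet.{0}} (f : S ⟶ T) : Prop :=
  ∃ (Z : SSet.{0}) (i : S ⟶ Z) (p : Z ⟶ T),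
    Anodyne i ∧ TrivialKanFibration p ∧ i ≫ p = f

/-! ## Saturated classes -/

/-- `f` is a retract of `g` in the arrow category. -/
def IsRetractOf {C : Type*} [Category C] {X Y X' Y' : C} (f : X ⟶ Y) (g : X' ⟶ Y') : Prop :=
  ∃ (i : Arrow.mk f ⟶ Arrow.mk g) (r : Arrow.mk g ⟶ Arrow.mk f), i ≫ r = 𝟙 _

/-- The inclusion functor of the subposet `{x | x < j}` of `J`. -/
def iioFunctor {J : Type} [Preorder J] (j : J) : Set.Iio j ⥤ J :=
  Monotone.functor (f := fun x => (x : J)) (fun _ _ h => h)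

/-- The cocone on the restriction of `F : J ⥤ C` to `{x | x < j}` with apex `F.obj j`. -/
def coconeBelow {J : Type} [Preorder J] {C : Type*} [Category C]
    (F : J ⥤ C) (j : J) : Cocone (iioFunctor j ⋙ F) where
  pt := F.obj j
  ι :=
    { app := fun x => F.map (homOfLE (le_of_lt x.2))
      naturality := fun x y g => by
        dsimp [iioFunctor, Monotone.functor]
        rw [← F.map_comp, Category.comp_id]
        congr 1 }

/-- A class of morphisms of simplicial sets is *saturated* (weakly saturated) if it is closed
under pushouts (cobase change), retracts and transfinite compositions. -/
structure IsSaturated (A : MorphismProperty SSet.{0}) : Prop where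
  pushout : ∀ ⦃X Y X' Y' : SSet.{0}⦄ (f : X ⟶ Y) (u : X ⟶ X') (v : Y ⟶ Y') (f' : X' ⟶ Y'),
    IsPushout f u v f' → A f → A f'
  retract : ∀ ⦃X Y X' Y' : SSet.{0}⦄ (f : X ⟶ Y) (g : X' ⟶ Y'),
    IsRetractOf f g → A g → A f
  transfinite : ∀ (J : Type) (_ : LinearOrder J) (_ : SuccOrder J) (_ : OrderBot J)
    (_ : WellFoundedLT J) (F : J ⥤ SSet.{0}) (c : Cocone F) (_ : IsColimit c),
    (∀ j : J, ¬IsMax j → A (F.map (homOfLE (Order.le_succ j)))) →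
    (∀ j : J, Order.IsSuccLimit j → Nonempty (IsColimit (coconeBelow F j))) →
    A (c.ι.app ⊥)

/-- Right cancellation property for monomorphisms. -/
def RightCancel (A : MorphismProperty SSet.{0}) : Prop :=
  ∀ ⦃X Y Z : SSet.{0}⦄ (u : X ⟶ Y) (v : Y ⟶ Z),
    Mono u → Mono v → A (u ≫ v) → A u → A v

/-- Left cancellation property for monomorphisms. -/
def LeftCancel (A : MorphismProperty SSet.{0}) : Prop :=
  ∀ ⦃X Y Z : SSet.{0}⦄ (u : X ⟶ Y) (v : Y ⟶ Z),
    Mono u → Mono v → A (u ≫ v) → A v → A u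

/-- 3-for-2 for monomorphisms: both left and right cancellation. -/
def ThreeForTwo (A : MorphismProperty SSet.{0}) : Prop :=
  RightCancel A ∧ LeftCancel A

/-! ## The left cone, the spine, and related subcomplexes of the standard simplex -/

/-- The left cone `C n ⊆ Δ[n]`: the union of the images of the initial edges `0 → i`. -/
def coneSub (n : ℕ) : Subfunctor Δ[n] where
  obj m := {α | ∃ i : ℕ, 1 ≤ i ∧ i ≤ n ∧
    ∀ j, (stdSimplex.asOrderHom α j : ℕ) = 0 ∨ (stdSimplex.asOrderHom α j : ℕ) = i}
  map := by
    rintro m m' g α ⟨i, hi1, hin, h⟩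
    exact ⟨i, hi1, hin, fun j => h _⟩

/-- The spine `Sp n ⊆ Δ[n]`: the union of the images of the edges `i → i+1`. -/
def spineSub (n : ℕ) : Subfunctor Δ[n] where
  obj m := {α | ∃ i : ℕ, i + 1 ≤ n ∧
    ∀ j, (stdSimplex.asOrderHom α j : ℕ) = i ∨ (stdSimplex.asOrderHom α j : ℕ) = i + 1}
  map := by
    rintro m m' g α ⟨i, hi, h⟩
    exact ⟨i, hi, fun j => h _⟩

/-- The union `(SpC) n ⊆ Δ[n]` of the images of the `2`-simplices `{0, i, i+1}`, `0 < i < n`. -/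
def spcSub (n : ℕ) : Subfunctor Δ[n] where
  obj m := {α | ∃ i : ℕ, 0 < i ∧ i + 1 ≤ n ∧
    ∀ j, (stdSimplex.asOrderHom α j : ℕ) = 0 ∨ (stdSimplex.asOrderHom α j : ℕ) = i ∨ (stdSimplex.asOrderHom α j : ℕ) = i + 1}
  map := by
    rintro m m' g α ⟨i, h₀, h₁, h⟩
    exact ⟨i, h₀, h₁, fun j => h _⟩

/-- The canonical inclusion `k n : C n → Λ[n, 0]` of the left cone into the left horn. -/
def coneToHorn (n : ℕ) (hn : 2 ≤ n) : ((coneSub n).toFunctor : SSet.{0}) ⟶ (Λ[n, 0] : SSet.{0}) where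
  app m := ↾fun α => by
    refine ⟨α.1, ?_⟩
    obtain ⟨i, hi1, hin, h⟩ := α.2
    intro hu
    rw [Set.eq_univ_iff_forall] at hu
    obtain ⟨kv, hkv0, hkvi, hkvlt⟩ : ∃ kv : ℕ, kv ≠ 0 ∧ kv ≠ i ∧ kv < n + 1 := by
      rcases eq_or_ne i 1 with hc | hc
      · exact ⟨2, by omega, by omega, by omega⟩
      · exact ⟨1, by omega, by omega, by omega⟩
    rcases hu ⟨kv, hkvlt⟩ with hr | h0
    · obtain ⟨j, hj⟩ := hr
      have hval := congrArg Fin.val hj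
      rcases h j with h' | h' <;> simp_all
    · have := congrArg Fin.val (Set.mem_singleton_iff.1 h0)
      simp_all

/-- The nerve `IΔ^n` of the free groupoid (codiscrete groupoid) on `{0, …, n}`:
its `m`-simplices are all (not necessarily monotone) functions `Fin (m+1) → Fin (n+1)`. -/
def IDelta (n : ℕ) : SSet.{0} where
  obj m := Fin (m.unop.len + 1) → Fin (n + 1)
  map f := ↾fun α => α ∘ f.unop.toOrderHom

/-- The canonical inclusion `Δ[n] → IΔ^n`. -/
def iDeltaIncl (n : ℕ) : (Δ[n] : SSet.{0}) ⟶ IDelta n where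
  app m := ↾fun α => ⇑(stdSimplex.asOrderHom α)

/-- The vertex `k : Δ[0] → IΔ^n`. -/
def iDeltaVertex (n : ℕ) (k : Fin (n + 1)) : (Δ[0] : SSet.{0}) ⟶ IDelta n where
  app m := ↾fun _ => fun _ => k


/-! ## Bisimplicial sets, the box product and the slash construction -/

/-- Bisimplicial sets: presheaves of sets on `Δ × Δ`. -/
abbrev BSSet : Type 1 := (SimplexCategory × SimplexCategory)ᵒᵖ ⥤ Type

/-- The box product `A □ B` of two simplicial sets: `(A □ B)_{n,m} = A_n × B_m`. -/
def box (A B : SSet.{0}) : BSSet where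
  obj nm := A.obj (op nm.unop.1) × B.obj (op nm.unop.2)
  map f := ↾fun p => ⟨A.map f.unop.1.op p.1, B.map f.unop.2.op p.2⟩

/-- The box product, functorially in its second variable. -/
def boxFunctor (A : SSet.{0}) : SSet.{0} ⥤ BSSet where
  obj B := box A B
  map g :=
    { app := fun nm => ↾fun p => ⟨p.1, g.app _ p.2⟩
      naturality := fun nm nm' f => by
        ext ⟨a, b⟩
        simp [box] }

/-- The box product is natural in its first variable. -/
def boxHomLeft {A A' : SSet.{0}} (f : A ⟶ A') (B : SSet.{0}) :
    (boxFunctor A).obj B ⟶ (boxFunctor A').obj B where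
  app nm := ↾fun p => ⟨f.app _ p.1, p.2⟩
  naturality nm nm' g := by
    ext ⟨a, b⟩
    simp [box, boxFunctor]

lemma boxHomLeft_natural {A A' : SSet.{0}} (f : A ⟶ A') {B B' : SSet.{0}} (g : B ⟶ B') :
    (boxFunctor A).map g ≫ boxHomLeft f B' = boxHomLeft f B ≫ (boxFunctor A').map g := rfl

/-- The simplicial set `A \ X` with `m`-simplices the bisimplicial maps `A □ Δ[m] → X`. -/
def slash (A : SSet.{0}) (X : BSSet) : SSet.{0} :=
  SSet.stdSimplex.op ⋙ ((boxFunctor A).op ⋙ yoneda.obj X)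

/-- Functoriality (contravariance) of `A \ X` in `A`. -/
def slashMap {A A' : SSet.{0}} (f : A ⟶ A') (X : BSSet) : slash A' X ⟶ slash A X :=
  Functor.whiskerLeft SSet.stdSimplex.op
    (Functor.whiskerRight (NatTrans.op
      { app := fun B => boxHomLeft f B
        naturality := fun _ _ g => (boxHomLeft_natural f g).symm }) (yoneda.obj X))

lemma slashMap_id (A : SSet.{0}) (X : BSSet) : slashMap (𝟙 A) X = 𝟙 (slash A X) := rfl

lemma slashMap_comp {A A' A'' : SSet.{0}} (f : A ⟶ A') (g : A' ⟶ A'') (X : BSSet) :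
    slashMap (f ≫ g) X = slashMap g X ≫ slashMap f X := rfl


/-! ## Columns, Reedy fibrancy, Segal and Bousfield maps -/

/-- The `n`-th column `X_n := Δ[n] \ X` of a bisimplicial set. -/
def col (n : ℕ) (X : BSSet) : SSet.{0} := slash Δ[n] X

/-- The face map `d_i : X_{n+1} → X_n` between columns. -/
def colδ {n : ℕ} (i : Fin (n + 2)) (X : BSSet) : col (n + 1) X ⟶ col n X :=
  slashMap (SSet.stdSimplex.map (SimplexCategory.δ i)) X

/-- The degeneracy map `s_i : X_n → X_{n+1}` between columns. -/
def colσ {n : ℕ} (i : Fin (n + 1)) (X : BSSet) : col n X ⟶ col (n + 1) X :=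
  slashMap (SSet.stdSimplex.map (SimplexCategory.σ i)) X

/-- A bisimplicial set is `v`-fibrant (Reedy fibrant) if `f \ X` is a Kan fibration for
every monomorphism `f` of simplicial sets. -/
def VFibrant (X : BSSet) : Prop :=
  ∀ ⦃A B : SSet.{0}⦄ (f : A ⟶ B), Mono f → KanFibration (slashMap f X)

/-- The `n`-th Bousfield map `β_n = c_n \ X : X_n → C_n \ X`. -/
def bousfieldMap (n : ℕ) (X : BSSet) : col n X ⟶ slash (coneSub n).toFunctor X :=
  slashMap (coneSub n).ι X

/-- The `n`-th Segal map `ξ_n = sp_n \ X : X_n → Sp_n \ X`. -/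
def segalMap (n : ℕ) (X : BSSet) : col n X ⟶ slash (spineSub n).toFunctor X :=
  slashMap (spineSub n).ι X

/-- A Bousfield-Segal space: a `v`-fibrant bisimplicial set whose Bousfield maps `β_n`,
`n ≥ 2`, are weak homotopy equivalences. -/
def IsBSegal (X : BSSet) : Prop :=
  VFibrant X ∧ ∀ n : ℕ, 2 ≤ n → WeakHomotopyEquivalence (bousfieldMap n X)

/-- A Segal space: a `v`-fibrant bisimplicial set whose Segal maps `ξ_n`,
`n ≥ 2`, are weak homotopy equivalences. -/
def IsSegal (X : BSSet) : Prop :=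
  VFibrant X ∧ ∀ n : ℕ, 2 ≤ n → WeakHomotopyEquivalence (segalMap n X)

/-- The map `IΔ^1 \ X → X_0` induced by the vertex `{0} : Δ[0] → IΔ^1`. -/
def completenessMap (X : BSSet) : slash (IDelta 1) X ⟶ col 0 X :=
  slashMap (iDeltaVertex 1 0) X

/-- A complete Bousfield-Segal space. -/
def IsCompleteBSegal (X : BSSet) : Prop :=
  IsBSegal X ∧ WeakHomotopyEquivalence (completenessMap X)

/-- A bisimplicial set is homotopically constant if every map of the simplex category
induces a weak homotopy equivalence between the corresponding columns. -/
def HomotopicallyConstant (X : BSSet) : Prop :=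
  ∀ ⦃a b : SimplexCategory⦄ (f : a ⟶ b),
    WeakHomotopyEquivalence (slashMap (SSet.stdSimplex.map f) X)

/-! ## Vertices, edges and the fraction operation -/

/-- The vertices of a simplicial set. -/
def vert (S : SSet.{0}) : Type := S.obj (op (SimplexCategory.mk 0))

/-- Two vertices of a simplicial set lie in the same connected component, i.e. they have
equal classes in `π₀`. -/
def hSim (S : SSet.{0}) (a b : vert S) : Prop :=
  Relation.EqvGen (fun v w : vert S => ∃ e : S.obj (op (SimplexCategory.mk 1)),
    SimplicialObject.δ S 1 e = v ∧ SimplicialObject.δ S 0 e = w) a b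

/-- The edge `0 → i` of the left cone `C n`. -/
def coneEdge (n : ℕ) (i : Fin (n + 1)) (hi : i ≠ 0) :
    (Δ[1] : SSet.{0}) ⟶ (coneSub n).toFunctor where
  app m := ↾fun β => by
    refine ⟨(SSet.stdSimplex.map (SimplexCategory.mkOfLe 0 i (Fin.zero_le i))).app m β, ?_⟩
    have hne : (i : ℕ) ≠ 0 := fun h => hi (by apply Fin.ext; simpa using h)
    refine ⟨(i : ℕ), by omega, i.is_le, fun j => ?_⟩
    have key : ∀ k : Fin 2,
        (((SimplexCategory.mkOfLe (0 : Fin (n + 1)) i (Fin.zero_le i)).toOrderHom k : Fin (n+1)) : ℕ) = 0 ∨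
        (((SimplexCategory.mkOfLe (0 : Fin (n + 1)) i (Fin.zero_le i)).toOrderHom k : Fin (n+1)) : ℕ) = i := by
      intro k
      match k with
      | 0 => left; rfl
      | 1 => right; rfl
    exact key _
  naturality m m' g := by
    ext β
    apply Subtype.ext
    exact ConcreteCategory.congr_hom ((SSet.stdSimplex.map
      (SimplexCategory.mkOfLe 0 i (Fin.zero_le i))).naturality g) β

variable (X : BSSet)

/-- Vertex component of the restriction along the edge `0 → 2` of `C₂` (the "numerator"). -/
def eF (w : vert (slash (coneSub 2).toFunctor X)) : vert (col 1 X) :=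
  (slashMap (coneEdge 2 2 (by decide)) X).app _ w

/-- Vertex component of the restriction along the edge `0 → 1` of `C₂` (the "denominator"). -/
def eG (w : vert (slash (coneSub 2).toFunctor X)) : vert (col 1 X) :=
  (slashMap (coneEdge 2 1 (by decide)) X).app _ w

/-- Vertex component of the face map `d_i : X_1 → X_0`. -/
def dV (i : Fin 2) (f : vert (col 1 X)) : vert (col 0 X) := (colδ i X).app _ f

/-- Vertex component of the degeneracy `s_0 : X_0 → X_1`; `oneV X x` is `1_x`. -/
def oneV (x : vert (col 0 X)) : vert (col 1 X) := (colσ 0 X).app _ x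

/-- The fraction operation determined by a section `μ₂` of the Bousfield map `β₂`:
`f/g := d₀ (μ₂ (f, g))`. -/
def fracV (μ₂ : slash (coneSub 2).toFunctor X ⟶ col 2 X)
    (w : vert (slash (coneSub 2).toFunctor X)) : vert (col 1 X) :=
  (colδ 0 X).app _ (μ₂.app _ w)

lemma dV_oneV (x : vert (col 0 X)) (i : Fin 2) : dV X i (oneV X x) = x := by
  have h : colσ (0 : Fin 1) X ≫ colδ i X = 𝟙 (col 0 X) := by
    rw [colδ, colσ]
    erw [← slashMap_comp, ← Functor.map_comp]
    have : SimplexCategory.δ i ≫ SimplexCategory.σ (0 : Fin 1) = 𝟙 (SimplexCategory.mk 0) := by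
      fin_cases i
      · exact SimplexCategory.δ_comp_σ_self
      · exact SimplexCategory.δ_comp_σ_succ
    erw [this, CategoryTheory.Functor.map_id, slashMap_id]; rfl
  exact ConcreteCategory.congr_hom (congrArg (fun (t : col 0 X ⟶ col 0 X) => t.app (op (SimplexCategory.mk 0)))
    h) x

/-- The identity morphism `1_x` as an element of the hom-space `X₁(x,x)`. -/
def idHom (x : vert (col 0 X)) :
    {f : vert (col 1 X) // dV X 1 f = x ∧ dV X 0 f = x} :=
  ⟨oneV X x, dV_oneV X x 1, dV_oneV X x 0⟩


/-! ## Cellularity, pushouts of coproducts, finite compositions of pushouts -/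

/-- `f` is a pushout (cobase change) of `g`. -/
def IsPushoutOf {C : Type*} [Category C] {A B X Y : C} (g : A ⟶ B) (f : X ⟶ Y) : Prop :=
  ∃ (u : A ⟶ X) (v : B ⟶ Y), IsPushout g u v f

/-- `f` is a pushout of a coproduct of maps belonging to the class `S`. -/
def IsPushoutOfCoproductOf (S : MorphismProperty SSet.{0}) {P Q : SSet.{0}} (f : P ⟶ Q) : Prop :=
  ∃ (ι : Type) (A B : ι → SSet.{0}) (g : ∀ i, A i ⟶ B i),
    (∀ i, S (g i)) ∧
      IsPushoutOf (Limits.Sigma.desc (fun i => g i ≫ Limits.Sigma.ι B i) : (∐ A) ⟶ (∐ B)) f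

/-- `f` is cellular with respect to the class `S`: it is a (transfinite, here `ℕ`-indexed)
composition of pushouts of coproducts of maps of `S`. -/
def IsCellularIn (S : MorphismProperty SSet.{0}) {X Y : SSet.{0}} (f : X ⟶ Y) : Prop :=
  ∃ (F : ℕ ⥤ SSet.{0}) (c : Cocone F) (_ : IsColimit c) (e₀ : F.obj 0 ≅ X) (e : c.pt ≅ Y),
    (∀ m : ℕ, IsPushoutOfCoproductOf S (F.map (homOfLE (Nat.le_succ m)))) ∧
      f = e₀.inv ≫ c.ι.app 0 ≫ e.hom

/-- `f` is a finite composition of pushouts of `g`. -/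
inductive FinCompPushoutsOf {A B : SSet.{0}} (g : A ⟶ B) : ∀ {X Y : SSet.{0}}, (X ⟶ Y) → Prop where
  | of {X Y : SSet.{0}} (f : X ⟶ Y) : IsPushoutOf g f → FinCompPushoutsOf g f
| comp {X Y Z : SSet.{0}} (f₁ : X ⟶ Y) (f₂ : Y ⟶ Z) :
      IsPushoutOf g f₁ → FinCompPushoutsOf g f₂ → FinCompPushoutsOf g (f₁ ≫ f₂)

/-! ## Lattice operations on subpresheaves -/

variable {C : Type*} [Category C]

/-- Intersection of two subpresheaves. -/
def subInf {F : Cᵒᵖ ⥤ Type} (G G' : Subfunctor F) : Subfunctor F where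
  obj U := G.obj U ∩ G'.obj U
  map i := fun _ hx => ⟨G.map i hx.1, G'.map i hx.2⟩

/-- Union of two subpresheaves. -/
def subSup {F : Cᵒᵖ ⥤ Type} (G G' : Subfunctor F) : Subfunctor F where
  obj U := G.obj U ∪ G'.obj U
  map i := by
    rintro x (hx | hx)
    · exact Or.inl (G.map i hx)
    · exact Or.inr (G'.map i hx)

lemma subInf_le_left {F : Cᵒᵖ ⥤ Type} (G G' : Subfunctor F) : subInf G G' ≤ G :=
  fun _ => Set.inter_subset_left

lemma le_subSup_left {F : Cᵒᵖ ⥤ Type} (G G' : Subfunctor F) : G ≤ subSup G G' :=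
  fun _ => Set.subset_union_left

/-! ## The coface `d¹` and the left cone -/

/-- The coface map `d¹ : Δ[n] → Δ[n+1]`. -/
def d1Map (n : ℕ) : (Δ[n] : SSet.{0}) ⟶ Δ[n + 1] :=
  SSet.stdSimplex.map (SimplexCategory.δ 1)

/-- The restriction of `d¹` to a map `C n → C (n+1) ∩ d¹[Δ[n]]`. -/
def coneToInter (n : ℕ) : ((coneSub n).toFunctor : SSet.{0}) ⟶
    (subInf (coneSub (n + 1)) (Subfunctor.range (d1Map n))).toFunctor where
  app m := ↾fun α => by
    refine ⟨(d1Map n).app m α.1, ?_, ⟨α.1, rfl⟩⟩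
    obtain ⟨i, hi1, hin, h⟩ := α.2
    refine ⟨i + 1, by omega, by omega, fun j => ?_⟩
    have key : stdSimplex.asOrderHom ((d1Map n).app m α.1) j
        = (1 : Fin (n + 2)).succAbove (stdSimplex.asOrderHom α.1 j) := rfl
    rcases h j with h' | h'
    · left
      have h0 : stdSimplex.asOrderHom α.1 j = 0 := by
        apply Fin.ext; exact h'
      rw [key, h0, Fin.succAbove_of_castSucc_lt]
      · simp
      · simp
    · right
      rw [key, Fin.succAbove_of_le_castSucc]
      · simp [Fin.val_succ, h']
      · rw [Fin.le_def]
        simpa using by omega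
  naturality m m' g := by
    ext α
    apply Subtype.ext
    exact ConcreteCategory.congr_hom ((d1Map n).naturality g) α.1

/-! ## Horizontally constant bisimplicial sets and closure properties -/

/-- `p₁* A`: the horizontally constant bisimplicial set with `(p₁* A)_{n,m} = A_n`. -/
def pHorizontal (A : SSet.{0}) : BSSet where
  obj nm := A.obj (op nm.unop.1)
  map f := A.map f.unop.1.op

/-- A class of maps of bisimplicial sets is stable under pullbacks. -/
def StableUnderPullbacksB (F : MorphismProperty BSSet) : Prop :=
  ∀ ⦃W X Y Z : BSSet⦄ (p' : W ⟶ X) (f' : W ⟶ Z) (f : X ⟶ Y) (p : Z ⟶ Y),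
    IsPullback p' f' f p → F f → F f'

/-- A class of maps of bisimplicial sets is stable under retracts. -/
def StableUnderRetractsB (F : MorphismProperty BSSet) : Prop :=
  ∀ ⦃X Y X' Y' : BSSet⦄ (f : X ⟶ Y) (g : X' ⟶ Y'), IsRetractOf f g → F g → F f

/-- A class of maps of bisimplicial sets is closed under sequential (inverse) limits:
limits of towers of arrows belonging to the class again belong to the class. -/
def ClosedUnderSequentialLimitsB (F : MorphismProperty BSSet) : Prop :=
  ∀ (G : ℕᵒᵖ ⥤ Arrow BSSet), (∀ n : ℕᵒᵖ, F (G.obj n).hom) →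
    ∀ (c : Cone G), IsLimit c → F c.pt.hom


namespace Cellular

variable {n : ℕ}

/-- Number of changes (descents+ascents) of a word. -/
def nchg {k : ℕ} (x : Fin (k + 1) → Fin (n + 1)) : ℕ :=
  (Finset.univ.filter fun j : Fin k => x j.castSucc ≠ x j.succ).card

/-- Penalty: 1 if the word does not start with 0. -/
def pen {k : ℕ} (x : Fin (k + 1) → Fin (n + 1)) : ℕ := if x 0 = 0 then 0 else 1

/-- Weight of a word. -/
def wt {k : ℕ} (x : Fin (k + 1) → Fin (n + 1)) : ℕ := nchg x + pen x

lemma pen_le_one {k : ℕ} (x : Fin (k + 1) → Fin (n + 1)) : pen x ≤ 1 := by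
  unfold pen; split <;> omega

lemma rel_of_steps {k : ℕ} (x : Fin (k + 1) → Fin (n + 1)) (r : Fin (n+1) → Fin (n+1) → Prop)
    (hrefl : ∀ a, r a a) (htrans : ∀ {a b c}, r a b → r b c → r a c)
    {p q : Fin (k+1)} (hpq : p ≤ q)
    (h : ∀ j : Fin k, p ≤ j.castSucc → j.succ ≤ q → r (x j.castSucc) (x j.succ)) :
    r (x p) (x q) := by
  induction q using Fin.induction with
  | zero =>
    obtain rfl : p = 0 := le_antisymm hpq (Fin.zero_le p)
    exact hrefl _
  | succ i ih =>
    rcases eq_or_ne p i.succ with rfl | hne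
    · exact hrefl _
    · have hp : p ≤ i.castSucc := by
        have h1 := Fin.le_def.mp hpq
        have h2 : (p : ℕ) ≠ (i.succ : ℕ) := fun hval => hne (Fin.ext hval)
        rw [Fin.le_def]
        simp only [Fin.coe_castSucc]
        simp only [Fin.val_succ] at h1 h2
        omega
      have hcs : i.castSucc ≤ i.succ := by
        rw [Fin.le_def]; simp
      exact htrans (ih hp (fun j h1 h2 => h j h1 (h2.trans hcs))) (h i hp (le_refl _))

lemma monotone_of_steps {k : ℕ} (x : Fin (k + 1) → Fin (n + 1))
    (h : ∀ j : Fin k, x j.castSucc ≤ x j.succ) : Monotone x :=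
  fun _ _ hpq =>
    rel_of_steps x (· ≤ ·) le_refl (fun h1 h2 => le_trans h1 h2) hpq (fun j _ _ => h j)

lemma exists_descent {k : ℕ} (x : Fin (k + 1) → Fin (n + 1)) (h : ¬ Monotone x) :
    ∃ j : Fin k, x j.succ < x j.castSucc := by
  by_contra hc
  push_neg at hc
  exact h (monotone_of_steps x hc)

lemma exists_change {k : ℕ} (x : Fin (k+1) → Fin (n+1)) {p q : Fin (k+1)} (hpq : p ≤ q)
    (hne : x p ≠ x q) :
    ∃ j : Fin k, p ≤ j.castSucc ∧ j.succ ≤ q ∧ x j.castSucc ≠ x j.succ := by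
  by_contra hc
  push_neg at hc
  exact hne (rel_of_steps x Eq (fun _ => rfl) (fun h1 h2 => h1.trans h2) hpq
    (fun j h1 h2 => hc j h1 h2))

lemma castSucc_le_succ' {k : ℕ} (a : Fin k) : (a.castSucc : Fin (k+1)) ≤ a.succ := by
  rw [Fin.le_def]; simp

lemma succ_le_castSucc_of_lt {k : ℕ} {a b : Fin k} (h : a < b) : a.succ ≤ b.castSucc := by
  rw [Fin.le_def]; simp only [Fin.val_succ, Fin.coe_castSucc]
  exact h

lemma nchg_comp_le {k k' : ℕ} (x : Fin (k + 1) → Fin (n + 1)) (g : Fin (k' + 1) → Fin (k + 1))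
    (hg : Monotone g) : nchg (x ∘ g) ≤ nchg x := by
  rcases Nat.eq_zero_or_pos k with rfl | hk
  · suffices h : nchg (x ∘ g) = 0 by omega
    unfold nchg
    rw [Finset.card_eq_zero]
    apply Finset.filter_eq_empty_iff.mpr
    intro a _
    simp only [Function.comp, ne_eq, not_not]
    have h1 := (g a.castSucc).isLt
    have h2 := (g a.succ).isLt
    exact congrArg x (Fin.ext (by omega))
  · have hinh : Inhabited (Fin k) := ⟨⟨0, hk⟩⟩
    set S : Fin k' → Finset (Fin k) := fun a =>
      Finset.univ.filter fun j : Fin k =>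
        g a.castSucc ≤ j.castSucc ∧ j.succ ≤ g a.succ ∧ x j.castSucc ≠ x j.succ with hS
    have hSne : ∀ a : Fin k', (x ∘ g) a.castSucc ≠ (x ∘ g) a.succ → (S a).Nonempty := by
      intro a ha
      obtain ⟨j, h1, h2, h3⟩ := exists_change x (hg (castSucc_le_succ' a)) ha
      exact ⟨j, by simp [hS, Finset.mem_filter, h1, h2, h3]⟩
    apply Finset.card_le_card_of_injOn
      (fun a => if h : (S a).Nonempty then (S a).min' h else default)
    · intro a ha
      simp only [Finset.coe_filter, Finset.mem_coe, Finset.mem_filter, Finset.mem_univ, true_and,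
        Set.mem_setOf_eq] at ha ⊢
      rw [dif_pos (hSne a ha)]
      have hmem := (S a).min'_mem (hSne a ha)
      simp only [hS, Finset.mem_filter, Finset.mem_univ, true_and] at hmem
      exact hmem.2.2
    · intro a ha b hb hab
      dsimp only at hab
      simp only [Finset.coe_filter, Finset.mem_univ, true_and, Set.mem_setOf_eq] at ha hb
      rcases lt_trichotomy a b with hlt | heq | hlt
      · exfalso
        rw [dif_pos (hSne a ha), dif_pos (hSne b hb)] at hab
        have hma := (S a).min'_mem (hSne a ha)
        have hmb := (S b).min'_mem (hSne b hb)
        simp only [hS, Finset.mem_filter, Finset.mem_univ, true_and] at hma hmb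
        have h1 : ((S a).min' (hSne a ha)).succ ≤ g a.succ := hma.2.1
        have h2 : g b.castSucc ≤ ((S b).min' (hSne b hb)).castSucc := hmb.1
        have h3 : g a.succ ≤ g b.castSucc := hg (succ_le_castSucc_of_lt hlt)
        have := (h1.trans h3).trans h2
        rw [Fin.le_def] at this
        simp only [Fin.val_succ, Fin.coe_castSucc] at this
        rw [hab] at this
        omega
      · exact heq
      · exfalso
        rw [dif_pos (hSne a ha), dif_pos (hSne b hb)] at hab
        have hma := (S a).min'_mem (hSne a ha)
        have hmb := (S b).min'_mem (hSne b hb)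
        simp only [hS, Finset.mem_filter, Finset.mem_univ, true_and] at hma hmb
        have h1 : ((S b).min' (hSne b hb)).succ ≤ g b.succ := hmb.2.1
        have h2 : g a.castSucc ≤ ((S a).min' (hSne a ha)).castSucc := hma.1
        have h3 : g b.succ ≤ g a.castSucc := hg (succ_le_castSucc_of_lt hlt)
        have := (h1.trans h3).trans h2
        rw [Fin.le_def] at this
        simp only [Fin.val_succ, Fin.coe_castSucc] at this
        rw [hab] at this
        omega

/-- Prepend `0` to a word. -/
def hat {k : ℕ} (x : Fin (k+1) → Fin (n+1)) : Fin (k+2) → Fin (n+1) := Fin.cases 0 x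

def hatg {k k' : ℕ} (g : Fin (k'+1) → Fin (k+1)) : Fin (k'+2) → Fin (k+2) :=
  Fin.cases 0 (Fin.succ ∘ g)

lemma hat_comp {k k' : ℕ} (x : Fin (k+1) → Fin (n+1)) (g : Fin (k'+1) → Fin (k+1)) :
    hat (x ∘ g) = hat x ∘ hatg g := by
  funext i
  induction i using Fin.cases with
  | zero => rfl
  | succ i => simp [hat, hatg, Function.comp]

lemma hatg_monotone {k k' : ℕ} (g : Fin (k'+1) → Fin (k+1)) (hg : Monotone g) :
    Monotone (hatg g) := by
  intro i j hij
  induction i using Fin.cases with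
  | zero =>
    induction j using Fin.cases with
    | zero => exact le_refl _
    | succ j => exact Fin.zero_le _
  | succ i =>
    induction j using Fin.cases with
    | zero =>
      exact absurd (Fin.le_zero_iff.mp hij) (Fin.succ_ne_zero i)
    | succ j =>
      simp only [hatg, Fin.cases_succ, Function.comp]
      exact Fin.succ_le_succ_iff.mpr (hg (Fin.succ_le_succ_iff.mp hij))

lemma nchg_hat {k : ℕ} (x : Fin (k+1) → Fin (n+1)) : nchg (hat x) = nchg x + pen x := by
  unfold nchg
  rw [Finset.card_filter, Finset.card_filter, Fin.sum_univ_succ]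
  have h0 : (if hat x (0 : Fin (k+1)).castSucc ≠ hat x (0 : Fin (k+1)).succ then 1 else 0)
      = pen x := by
    have e1 : hat x (0 : Fin (k+1)).castSucc = 0 := rfl
    have e2 : hat x (0 : Fin (k+1)).succ = x 0 := by
      have : (0 : Fin (k+1)).succ = Fin.succ (0 : Fin (k+1)) := rfl
      rw [this]
      exact Fin.cases_succ _
    rw [e1, e2]
    unfold pen
    by_cases h : x 0 = 0
    · simp [h]
    · simp [h, Ne.symm h]
  have hsum : ∀ i : Fin k,
      (if hat x (i.succ).castSucc ≠ hat x (i.succ).succ then 1 else 0)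
      = (if x i.castSucc ≠ x i.succ then 1 else 0) := by
    intro i
    have e1 : hat x (i.succ).castSucc = x i.castSucc := by
      rw [← Fin.succ_castSucc]
      exact Fin.cases_succ _
    have e2 : hat x (i.succ).succ = x i.succ := Fin.cases_succ _
    rw [e1, e2]
  rw [h0]
  rw [Finset.sum_congr rfl (fun i _ => hsum i)]
  omega

lemma wt_comp_le {k k' : ℕ} (x : Fin (k+1) → Fin (n+1)) (g : Fin (k'+1) → Fin (k+1))
    (hg : Monotone g) : wt (x ∘ g) ≤ wt x := by
  have h := nchg_comp_le (hat x) (hatg g) (hatg_monotone g hg)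
  rw [← hat_comp, nchg_hat, nchg_hat] at h
  exact h

lemma nchg_comp_lt_card_image {k k' : ℕ} (x : Fin (k+1) → Fin (n+1))
    (g : Fin (k'+1) → Fin (k+1)) (hg : Monotone g) :
    nchg (x ∘ g) + 1 ≤ (Finset.image g Finset.univ).card := by
  have h2 : g (Fin.last k') ∈ Finset.image g Finset.univ :=
    Finset.mem_image.mpr ⟨_, Finset.mem_univ _, rfl⟩
  have h1 : nchg (x ∘ g) ≤ ((Finset.image g Finset.univ).erase (g (Fin.last k'))).card := by
    apply Finset.card_le_card_of_injOn (fun a => g a.castSucc)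
    · intro a ha
      simp only [Finset.coe_filter, Finset.mem_filter, Finset.mem_univ, true_and, Function.comp,
        Set.mem_setOf_eq] at ha
      have hlt : g a.castSucc < g a.succ :=
        lt_of_le_of_ne (hg (castSucc_le_succ' a)) (fun h => ha (congrArg x h))
      refine Finset.mem_erase.mpr ⟨ne_of_lt (lt_of_lt_of_le hlt (hg (Fin.le_last a.succ))), ?_⟩
      exact Finset.mem_image.mpr ⟨_, Finset.mem_univ _, rfl⟩
    · intro a ha b hb hab
      dsimp only at hab
      simp only [Finset.coe_filter, Finset.mem_univ, true_and, Set.mem_setOf_eq,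
        Function.comp] at ha hb
      rcases lt_trichotomy a b with hlt | heq | hlt
      · exfalso
        have h3 : g a.castSucc < g a.succ :=
          lt_of_le_of_ne (hg (castSucc_le_succ' a)) (fun h => ha (congrArg x h))
        have h4 : g a.succ ≤ g b.castSucc := hg (succ_le_castSucc_of_lt hlt)
        rw [hab] at h3
        exact absurd (lt_of_lt_of_le h3 h4) (lt_irrefl _)
      · exact heq
      · exfalso
        have h3 : g b.castSucc < g b.succ :=
          lt_of_le_of_ne (hg (castSucc_le_succ' b)) (fun h => hb (congrArg x h))
        have h4 : g b.succ ≤ g a.castSucc := hg (succ_le_castSucc_of_lt hlt)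
        rw [← hab] at h3
        exact absurd (lt_of_lt_of_le h3 h4) (lt_irrefl _)
  have h6 : 0 < (Finset.image g Finset.univ).card := Finset.card_pos.mpr ⟨_, h2⟩
  have h5 := Finset.card_erase_of_mem h2
  omega

lemma horn_wt_bound {m k : ℕ} (w : Fin (m+1) → Fin (n+1)) (hw0 : w 0 = 0)
    (g : Fin (k+1) → Fin (m+1)) (hg : Monotone g) (j₀ : Fin (m+1)) (hj₀ : j₀ ≠ 0)
    (hj : j₀ ∉ Set.range g) : wt (w ∘ g) + 1 ≤ m := by
  have himg : Finset.image g Finset.univ ⊆ Finset.univ.erase j₀ := by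
    intro j hjm
    obtain ⟨a, _, rfl⟩ := Finset.mem_image.mp hjm
    exact Finset.mem_erase.mpr ⟨fun h => hj ⟨a, h⟩, Finset.mem_univ _⟩
  have hc := nchg_comp_lt_card_image w g hg
  have hcard_univ : (Finset.univ : Finset (Fin (m+1))).card = m + 1 := by
    simp
  have hcard_erase : (Finset.univ.erase j₀).card = m := by
    rw [Finset.card_erase_of_mem (Finset.mem_univ _), hcard_univ]
    omega
  by_cases h0 : (0 : Fin (m+1)) ∈ Finset.image g Finset.univ
  · have hg0 : g 0 = 0 := by
      obtain ⟨a, _, ha⟩ := Finset.mem_image.mp h0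
      exact le_antisymm (le_of_le_of_eq (hg (Fin.zero_le a)) ha) (Fin.zero_le _)
    have hpen : pen (w ∘ g) = 0 := by
      simp [pen, Function.comp, hg0, hw0]
    have hcard : (Finset.image g Finset.univ).card ≤ m := by
      calc (Finset.image g Finset.univ).card ≤ (Finset.univ.erase j₀).card :=
            Finset.card_le_card himg
        _ = m := hcard_erase
    unfold wt
    omega
  · have himg2 : Finset.image g Finset.univ ⊆ (Finset.univ.erase j₀).erase 0 := by
      intro j hjm
      exact Finset.mem_erase.mpr ⟨fun h => h0 (h ▸ hjm), himg hjm⟩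
    have h0mem : (0 : Fin (m+1)) ∈ Finset.univ.erase j₀ :=
      Finset.mem_erase.mpr ⟨Ne.symm hj₀, Finset.mem_univ _⟩
    have hcard : (Finset.image g Finset.univ).card ≤ m - 1 := by
      calc (Finset.image g Finset.univ).card ≤ ((Finset.univ.erase j₀).erase 0).card :=
            Finset.card_le_card himg2
        _ = m - 1 := by rw [Finset.card_erase_of_mem h0mem, hcard_erase]
    have hpen := pen_le_one (w ∘ g)
    unfold wt
    omega

/-- Number of changes strictly below position `a`. -/
def cc {k : ℕ} (x : Fin (k+1) → Fin (n+1)) (a : Fin (k+1)) : ℕ :=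
  (Finset.univ.filter fun j : Fin k => (j : ℕ) < (a : ℕ) ∧ x j.castSucc ≠ x j.succ).card

lemma cc_zero {k : ℕ} (x : Fin (k+1) → Fin (n+1)) : cc x 0 = 0 := by
  simp [cc]

lemma cc_last {k : ℕ} (x : Fin (k+1) → Fin (n+1)) : cc x (Fin.last k) = nchg x := by
  unfold cc nchg
  congr 1
  ext j
  simp [j.isLt]

lemma cc_mono {k : ℕ} (x : Fin (k+1) → Fin (n+1)) : Monotone (cc x) := by
  intro a b hab
  apply Finset.card_le_card
  intro j hj
  simp only [Finset.mem_filter, Finset.mem_univ, true_and] at hj ⊢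
  exact ⟨lt_of_lt_of_le hj.1 (Fin.le_def.mp hab), hj.2⟩

lemma cc_le_nchg {k : ℕ} (x : Fin (k+1) → Fin (n+1)) (a : Fin (k+1)) : cc x a ≤ nchg x := by
  apply Finset.card_le_card
  intro j hj
  simp only [Finset.mem_filter, Finset.mem_univ, true_and] at hj ⊢
  exact hj.2

lemma cc_succ {k : ℕ} (x : Fin (k+1) → Fin (n+1)) (a : Fin k) :
    cc x a.succ = cc x a.castSucc + if x a.castSucc ≠ x a.succ then 1 else 0 := by
  unfold cc
  simp only [Fin.val_succ, Fin.coe_castSucc]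
  by_cases hch : x a.castSucc ≠ x a.succ
  · rw [if_pos hch]
    have heq : (Finset.univ.filter fun j : Fin k => (j:ℕ) < (a:ℕ)+1 ∧ x j.castSucc ≠ x j.succ)
        = insert a (Finset.univ.filter fun j : Fin k => (j:ℕ) < (a:ℕ) ∧ x j.castSucc ≠ x j.succ) := by
      ext j
      simp only [Finset.mem_filter, Finset.mem_univ, true_and, Finset.mem_insert]
      constructor
      · rintro ⟨hlt, hc⟩
        rcases (by omega : (j:ℕ) = (a:ℕ) ∨ (j:ℕ) < (a:ℕ)) with h | h
        · exact Or.inl (Fin.ext h)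
        · exact Or.inr ⟨h, hc⟩
      · rintro (rfl | ⟨h, hc⟩)
        · exact ⟨by omega, hch⟩
        · exact ⟨by omega, hc⟩
    rw [heq, Finset.card_insert_of_notMem (by simp [Finset.mem_filter])]
  · rw [if_neg hch]
    have heqx := not_ne_iff.mp hch
    have hflt : (Finset.univ.filter fun j : Fin k => (j:ℕ) < (a:ℕ)+1 ∧ x j.castSucc ≠ x j.succ)
        = Finset.univ.filter fun j : Fin k => (j:ℕ) < (a:ℕ) ∧ x j.castSucc ≠ x j.succ := by
      ext j
      simp only [Finset.mem_filter, Finset.mem_univ, true_and]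
      constructor
      · rintro ⟨hlt, hc⟩
        rcases (by omega : (j:ℕ) = (a:ℕ) ∨ (j:ℕ) < (a:ℕ)) with h | h
        · exact absurd heqx (Fin.ext h ▸ hc)
        · exact ⟨h, hc⟩
      · rintro ⟨hlt, hc⟩
        exact ⟨by omega, hc⟩
    rw [hflt]
    omega

lemma cc_lt_of_change {k : ℕ} (x : Fin (k+1) → Fin (n+1)) {p q : Fin (k+1)} (j : Fin k)
    (hch : x j.castSucc ≠ x j.succ) (h1 : p ≤ j.castSucc) (h2 : j.succ ≤ q) :
    cc x p < cc x q := by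
  have e1 := cc_mono x h1
  have e2 := cc_mono x h2
  have e3 := cc_succ x j
  rw [if_pos hch] at e3
  omega

lemma eq_of_cc_eq {k : ℕ} (x : Fin (k+1) → Fin (n+1)) {p q : Fin (k+1)} (hpq : p ≤ q)
    (hcc : cc x p = cc x q) : x p = x q := by
  apply rel_of_steps x Eq (fun _ => rfl) (fun h1 h2 => h1.trans h2) hpq
  intro j h1 h2
  by_contra hne
  exact absurd hcc (Nat.ne_of_lt (cc_lt_of_change x j hne h1 h2))

section FullRange

variable {m k : ℕ} {w : Fin (m+1) → Fin (n+1)} {g : Fin (k+1) → Fin (m+1)}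

lemma full_step (hg : Monotone g) (hfull : ∀ j : Fin (m+1), j ≠ 0 → ∃ a, g a = j)
    (a : Fin k) : (g a.succ : ℕ) ≤ (g a.castSucc : ℕ) + 1 := by
  by_contra hc
  push_neg at hc
  have hv : (g a.castSucc : ℕ) + 1 < m + 1 := by
    have := (g a.succ).isLt
    omega
  obtain ⟨a', ha'⟩ := hfull ⟨(g a.castSucc : ℕ) + 1, hv⟩ (by
    intro h
    have := congrArg Fin.val h
    simp at this)
  have hval : (g a' : ℕ) = (g a.castSucc : ℕ) + 1 := congrArg Fin.val ha'
  rcases le_or_gt a' a.castSucc with h | h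
  · have := Fin.le_def.mp (hg h)
    omega
  · have hle : a.succ ≤ a' := by
      rw [Fin.le_def]
      rw [Fin.lt_def] at h
      simp only [Fin.coe_castSucc] at h
      simp only [Fin.val_succ]
      omega
    have := Fin.le_def.mp (hg hle)
    omega

lemma full_g0 (hm : 0 < m) (hg : Monotone g)
    (hfull : ∀ j : Fin (m+1), j ≠ 0 → ∃ a, g a = j) : (g 0 : ℕ) ≤ 1 := by
  by_contra hc
  push_neg at hc
  obtain ⟨a', ha'⟩ := hfull ⟨1, by omega⟩ (by
    intro h
    have := congrArg Fin.val h
    simp at this)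
  have hval : (g a' : ℕ) = 1 := congrArg Fin.val ha'
  have := Fin.le_def.mp (hg (Fin.zero_le a'))
  omega

lemma full_glast (hm : 0 < m) (hg : Monotone g)
    (hfull : ∀ j : Fin (m+1), j ≠ 0 → ∃ a, g a = j) : (g (Fin.last k) : ℕ) = m := by
  obtain ⟨a', ha'⟩ := hfull ⟨m, by omega⟩ (by
    intro h
    have := congrArg Fin.val h
    simp at this
    omega)
  have hval : (g a' : ℕ) = m := congrArg Fin.val ha'
  have h1 := Fin.le_def.mp (hg (Fin.le_last a'))
  have h2 := (g (Fin.last k)).isLt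
  omega

lemma full_chg_iff (hred : ∀ j : Fin m, w j.castSucc ≠ w j.succ)
    (hg : Monotone g) (hfull : ∀ j : Fin (m+1), j ≠ 0 → ∃ a, g a = j) (a : Fin k) :
    (w ∘ g) a.castSucc ≠ (w ∘ g) a.succ ↔ (g a.castSucc : ℕ) + 1 = (g a.succ : ℕ) := by
  constructor
  · intro hne
    have h1 : g a.castSucc ≠ g a.succ := fun h => hne (congrArg w h)
    have h2 := Fin.le_def.mp (hg (castSucc_le_succ' a))
    have h3 := full_step hg hfull a
    have h4 : (g a.castSucc : ℕ) ≠ (g a.succ : ℕ) := fun h => h1 (Fin.ext h)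
    omega
  · intro heq
    have hlt : (g a.castSucc : ℕ) < m := by
      have := (g a.succ).isLt
      omega
    set j : Fin m := ⟨(g a.castSucc : ℕ), hlt⟩ with hj
    have e1 : j.castSucc = g a.castSucc := Fin.ext rfl
    have e2 : j.succ = g a.succ := Fin.ext (by simp [hj, heq])
    have := hred j
    rw [e1, e2] at this
    exact this

lemma full_g_eq (hred : ∀ j : Fin m, w j.castSucc ≠ w j.succ)
    (hg : Monotone g) (hfull : ∀ j : Fin (m+1), j ≠ 0 → ∃ a, g a = j) (a : Fin (k+1)) :
    (g a : ℕ) = (g 0 : ℕ) + cc (w ∘ g) a := by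
  induction a using Fin.induction with
  | zero => rw [cc_zero]; omega
  | succ i ih =>
    have hcs := cc_succ (w ∘ g) i
    have hstep := full_step hg hfull i
    have hmono := Fin.le_def.mp (hg (castSucc_le_succ' i))
    by_cases hch : (w ∘ g) i.castSucc ≠ (w ∘ g) i.succ
    · have := (full_chg_iff hred hg hfull i).mp hch
      rw [if_pos hch] at hcs
      omega
    · have hne := (full_chg_iff hred hg hfull i).not.mp hch
      rw [if_neg hch] at hcs
      omega

lemma full_g0_pen (hm : 0 < m) (hw0 : w 0 = 0)
    (hred : ∀ j : Fin m, w j.castSucc ≠ w j.succ)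
    (hg : Monotone g) (hfull : ∀ j : Fin (m+1), j ≠ 0 → ∃ a, g a = j) :
    (g 0 : ℕ) = pen (w ∘ g) := by
  have h01 := full_g0 hm hg hfull
  unfold pen
  rcases (by omega : (g 0 : ℕ) = 0 ∨ (g 0 : ℕ) = 1) with h | h
  · have hg0 : g 0 = 0 := Fin.ext h
    simp [Function.comp, hg0, hw0, h]
  · have hg0 : g 0 = ⟨1, by omega⟩ := Fin.ext h
    have hne : w ⟨1, by omega⟩ ≠ 0 := by
      have := hred ⟨0, hm⟩
      have e1 : (⟨0, hm⟩ : Fin m).castSucc = 0 := Fin.ext rfl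
      have e2 : (⟨0, hm⟩ : Fin m).succ = ⟨1, by omega⟩ := Fin.ext rfl
      rw [e1, e2, hw0] at this
      exact Ne.symm this
    have : (w ∘ g) 0 ≠ 0 := by
      simp only [Function.comp]
      rw [hg0]
      exact hne
    rw [if_neg this, h]

lemma full_wt (hm : 0 < m) (hw0 : w 0 = 0)
    (hred : ∀ j : Fin m, w j.castSucc ≠ w j.succ)
    (hg : Monotone g) (hfull : ∀ j : Fin (m+1), j ≠ 0 → ∃ a, g a = j) :
    wt (w ∘ g) = m := by
  have h1 := full_g_eq hred hg hfull (Fin.last k)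
  have h2 := full_glast hm hg hfull
  have h3 := full_g0_pen hm hw0 hred hg hfull
  have h4 := cc_last (w ∘ g)
  unfold wt
  omega

lemma full_not_mono (hw0 : w 0 = 0) (hwm : ¬ Monotone w) (hg : Monotone g)
    (hfull : ∀ j : Fin (m+1), j ≠ 0 → ∃ a, g a = j) : ¬ Monotone (w ∘ g) := by
  obtain ⟨j, hj⟩ := exists_descent w hwm
  have hjne : j.castSucc ≠ 0 := by
    intro h
    rw [h, hw0] at hj
    exact absurd hj (by simp)
  obtain ⟨a, ha⟩ := hfull j.castSucc hjne
  obtain ⟨b, hb⟩ := hfull j.succ (by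
    intro h
    have := congrArg Fin.val h
    simp [Fin.val_succ] at this)
  have hab : a < b := by
    by_contra hc
    push_neg at hc
    have := hg hc
    rw [ha, hb] at this
    have h1 := Fin.le_def.mp this
    simp only [Fin.val_succ, Fin.coe_castSucc] at h1
    omega
  intro hM
  have := hM (le_of_lt hab)
  simp only [Function.comp] at this
  rw [ha, hb] at this
  exact absurd (lt_of_le_of_lt this hj) (lt_irrefl _)

lemma full_unique {w' : Fin (m+1) → Fin (n+1)} {g' : Fin (k+1) → Fin (m+1)}
    (hm : 0 < m)
    (hw0 : w 0 = 0) (hred : ∀ j : Fin m, w j.castSucc ≠ w j.succ)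
    (hg : Monotone g) (hfull : ∀ j : Fin (m+1), j ≠ 0 → ∃ a, g a = j)
    (hw0' : w' 0 = 0) (hred' : ∀ j : Fin m, w' j.castSucc ≠ w' j.succ)
    (hg' : Monotone g') (hfull' : ∀ j : Fin (m+1), j ≠ 0 → ∃ a, g' a = j)
    (heq : w ∘ g = w' ∘ g') : w = w' ∧ g = g' := by
  have hgg : g = g' := by
    funext a
    apply Fin.ext
    have h1 := full_g_eq hred hg hfull a
    have h2 := full_g_eq hred' hg' hfull' a
    have h3 := full_g0_pen hm hw0 hred hg hfull
    have h4 := full_g0_pen hm hw0' hred' hg' hfull'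
    rw [heq] at h1 h3
    omega
  refine ⟨?_, hgg⟩
  funext j
  rcases eq_or_ne j 0 with rfl | hj
  · rw [hw0, hw0']
  · obtain ⟨a, rfl⟩ := hfull j hj
    have := congrFun heq a
    simp only [Function.comp] at this
    rw [this, hgg]

end FullRange

lemma exists_decomposition {k m : ℕ} (hm : 0 < m) (x : Fin (k+1) → Fin (n+1))
    (hx : ¬ Monotone x) (hwt : wt x = m) :
    ∃ (w : Fin (m+1) → Fin (n+1)) (g : Fin (k+1) → Fin (m+1)),
      w 0 = 0 ∧ (∀ j : Fin m, w j.castSucc ≠ w j.succ) ∧ ¬ Monotone w ∧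
      Monotone g ∧ (∀ j : Fin (m+1), j ≠ 0 → ∃ a, g a = j) ∧ w ∘ g = x := by
  have hpn : nchg x + pen x = m := hwt
  have hccle : ∀ a, cc x a ≤ nchg x := cc_le_nchg x
  set g : Fin (k+1) → Fin (m+1) := fun a => ⟨pen x + cc x a, by
    have := hccle a
    omega⟩ with hgdef
  have hgmono : Monotone g := by
    intro a b hab
    rw [Fin.le_def]
    simp only [hgdef]
    exact Nat.add_le_add_left (cc_mono x hab) _
  have hIVT : ∀ t : ℕ, t ≤ nchg x → ∃ a : Fin (k+1), cc x a = t := by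
    intro t ht
    have hne : (Finset.univ.filter fun a : Fin (k+1) => t ≤ cc x a).Nonempty :=
      ⟨Fin.last k, by simp [cc_last, ht]⟩
    set a0 := (Finset.univ.filter fun a : Fin (k+1) => t ≤ cc x a).min' hne with ha0
    have hmem : t ≤ cc x a0 := by
      have := Finset.min'_mem _ hne
      simp only [Finset.mem_filter, Finset.mem_univ, true_and] at this
      exact this
    rcases eq_or_ne a0 0 with h | h
    · refine ⟨0, ?_⟩
      rw [h, cc_zero] at hmem
      rw [cc_zero]
      omega
    · obtain ⟨b, hb⟩ := Fin.eq_succ_of_ne_zero h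
      have hnotmem : cc x b.castSucc < t := by
        by_contra hc
        push_neg at hc
        have hmem2 : b.castSucc ∈ Finset.univ.filter fun a : Fin (k+1) => t ≤ cc x a := by
          simp only [Finset.mem_filter, Finset.mem_univ, true_and]
          exact hc
        have := Finset.min'_le _ _ hmem2
        rw [← ha0, hb] at this
        have hv := Fin.le_def.mp this
        simp only [Fin.val_succ, Fin.coe_castSucc] at hv
        omega
      have hcs := cc_succ x b
      rw [hb] at hmem
      refine ⟨b.succ, ?_⟩
      split at hcs <;> omega
  have hfull : ∀ j : Fin (m+1), j ≠ 0 → ∃ a, g a = j := by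
    intro j hj
    have hjv : 1 ≤ (j : ℕ) := by
      rcases Nat.eq_zero_or_pos (j : ℕ) with h | h
      · exact absurd (Fin.ext h) hj
      · exact h
    have hjle : (j : ℕ) ≤ m := by
      have := j.isLt
      omega
    have hple := pen_le_one x
    obtain ⟨a, ha⟩ := hIVT ((j : ℕ) - pen x) (by omega)
    refine ⟨a, Fin.ext ?_⟩
    simp only [hgdef]
    omega
  have hSne : ∀ j : Fin (m+1), ¬ ((j:ℕ) < pen x) →
      (Finset.univ.filter fun a : Fin (k+1) => g a = j).Nonempty := by
    intro j hjp
    rw [not_lt] at hjp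
    rcases eq_or_ne j 0 with rfl | hj
    · have hp0 : pen x = 0 := by
        simp only [Fin.val_zero] at hjp
        omega
      refine ⟨0, ?_⟩
      simp only [Finset.mem_filter, Finset.mem_univ, true_and]
      apply Fin.ext
      simp [hgdef, hp0, cc_zero]
    · obtain ⟨a, ha⟩ := hfull j hj
      exact ⟨a, by simp only [Finset.mem_filter, Finset.mem_univ, true_and]; exact ha⟩
  set w : Fin (m+1) → Fin (n+1) := fun j =>
    if h : (j:ℕ) < pen x then 0
    else x ((Finset.univ.filter fun a : Fin (k+1) => g a = j).min' (hSne j h)) with hwdef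
  have hidx : ∀ (j : Fin (m+1)) (h : ¬ ((j:ℕ) < pen x)),
      g ((Finset.univ.filter fun a : Fin (k+1) => g a = j).min' (hSne j h)) = j := by
    intro j h
    have := Finset.min'_mem _ (hSne j h)
    simp only [Finset.mem_filter, Finset.mem_univ, true_and] at this
    exact this
  have hidx_le : ∀ (j : Fin (m+1)) (h : ¬ ((j:ℕ) < pen x)) (a : Fin (k+1)), g a = j →
      (Finset.univ.filter fun a : Fin (k+1) => g a = j).min' (hSne j h) ≤ a := by
    intro j h a ha
    exact Finset.min'_le _ _ (by simp only [Finset.mem_filter, Finset.mem_univ, true_and]; exact ha)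
  have hcomp : ∀ a, w (g a) = x a := by
    intro a
    have hge : ¬ ((g a : ℕ) < pen x) := by
      simp only [hgdef]
      omega
    rw [hwdef]
    simp only
    rw [dif_neg hge]
    set a0 := (Finset.univ.filter fun a' : Fin (k+1) => g a' = g a).min' (hSne _ hge) with ha0
    have h1 : g a0 = g a := hidx _ hge
    have h2 : a0 ≤ a := hidx_le _ hge a rfl
    have h3 : cc x a0 = cc x a := by
      have := congrArg Fin.val h1
      simp only [hgdef] at this
      omega
    exact eq_of_cc_eq x h2 h3
  have hw0 : w 0 = 0 := by
    rw [hwdef]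
    simp only
    by_cases hp : (0 : ℕ) < pen x
    · rw [dif_pos (by simpa using hp)]
    · rw [dif_neg (by simpa using hp)]
      have hp0 : pen x = 0 := by omega
      have hx0 : x 0 = 0 := by
        by_contra hc
        simp [pen, hc] at hp0
      have hg00 : g 0 = 0 := Fin.ext (by simp [hgdef, hp0, cc_zero])
      set a0 := (Finset.univ.filter fun a : Fin (k+1) => g a = 0).min' _ with ha0
      have : a0 ≤ 0 := hidx_le 0 (by simpa using hp) 0 hg00
      have ha00 : a0 = 0 := le_antisymm this (Fin.zero_le _)
      rw [ha00, hx0]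
  have hpen1 : pen x ≤ 1 := pen_le_one x
  have hred : ∀ j : Fin m, w j.castSucc ≠ w j.succ := by
    intro j
    have hsuccv : ((j.succ : Fin (m+1)) : ℕ) = (j : ℕ) + 1 := Fin.val_succ j
    have hcastv : ((j.castSucc : Fin (m+1)) : ℕ) = (j : ℕ) := Fin.coe_castSucc j
    have hsucc_ge : ¬ (((j.succ : Fin (m+1)) : ℕ) < pen x) := by omega
    by_cases hc : ((j.castSucc : Fin (m+1)) : ℕ) < pen x
    · -- j = 0, pen x = 1
      have hp1 : pen x = 1 := by omega
      have hx0 : x 0 ≠ 0 := by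
        intro h
        simp [pen, h] at hp1
      rw [hwdef]
      simp only
      rw [dif_pos hc, dif_neg hsucc_ge]
      set a2 := (Finset.univ.filter fun a : Fin (k+1) => g a = j.succ).min' _ with ha2
      have h1 : g a2 = j.succ := hidx _ hsucc_ge
      have h2 : cc x a2 = 0 := by
        have := congrArg Fin.val h1
        simp only [hgdef] at this
        omega
      have h3 : x a2 = x 0 := (eq_of_cc_eq x (Fin.zero_le a2) (by rw [cc_zero, h2])).symm
      rw [h3]
      exact fun h => hx0 h.symm
    · rw [hwdef]
      simp only
      rw [dif_neg hc, dif_neg hsucc_ge]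
      set a1 := (Finset.univ.filter fun a : Fin (k+1) => g a = j.castSucc).min' _ with ha1
      set a2 := (Finset.univ.filter fun a : Fin (k+1) => g a = j.succ).min' _ with ha2
      have h1 : g a1 = j.castSucc := hidx _ hc
      have h2 : g a2 = j.succ := hidx _ hsucc_ge
      have hv1 : pen x + cc x a1 = (j : ℕ) := by
        have := congrArg Fin.val h1
        simp only [hgdef] at this
        omega
      have hv2 : pen x + cc x a2 = (j : ℕ) + 1 := by
        have := congrArg Fin.val h2
        simp only [hgdef] at this
        omega
      have ha2ne : a2 ≠ 0 := by
        intro h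
        rw [h, cc_zero] at hv2
        omega
      obtain ⟨b, hb⟩ := Fin.eq_succ_of_ne_zero ha2ne
      have hbnotmem : g b.castSucc ≠ j.succ := by
        intro hmem
        have hle := hidx_le j.succ hsucc_ge b.castSucc hmem
        rw [← ha2, hb] at hle
        have := Fin.le_def.mp hle
        simp only [Fin.val_succ, Fin.coe_castSucc] at this
        omega
      have hcs := cc_succ x b
      have hcsa : cc x a2 = cc x b.succ := by rw [hb]
      have hbv : pen x + cc x b.castSucc ≠ (j : ℕ) + 1 := by
        intro hh
        exact hbnotmem (Fin.ext (by simp only [hgdef]; omega))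
      have hbcc : cc x b.castSucc = cc x a2 - 1 ∧ 1 ≤ cc x a2 := by
        constructor
        · split at hcs <;> omega
        · omega
      have hchb : x b.castSucc ≠ x b.succ := by
        by_contra hcc2
        rw [if_neg (not_ne_iff.mpr hcc2)] at hcs
        omega
      have hgb : g b.castSucc = j.castSucc := by
        apply Fin.ext
        simp only [hgdef, hcastv]
        omega
      have hle1 : a1 ≤ b.castSucc := hidx_le j.castSucc hc b.castSucc hgb
      have hcceq : cc x a1 = cc x b.castSucc := by omega
      have hxa1 : x a1 = x b.castSucc := eq_of_cc_eq x hle1 hcceq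
      rw [hxa1, hb]
      exact hchb
  have hwm : ¬ Monotone w := by
    intro hMw
    apply hx
    have : w ∘ g = x := funext hcomp
    rw [← this]
    exact hMw.comp hgmono
  exact ⟨w, g, hw0, hred, hwm, hgmono, hfull, funext hcomp⟩

open Classical in
/-- Selection data for the elementwise pushout criterion. -/
noncomputable def poDesc {A B X Y : Type} {f : A ⟶ B} (u : A ⟶ X) {v : B ⟶ Y} {f' : X ⟶ Y}
    (hsel : ∀ y : Y, ¬ (∃ x, f' x = y) → {b : B // v b = y ∧ b ∉ Set.range f})
    (s : PushoutCocone f u) : Y → s.pt := fun y =>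
  if h : ∃ x, f' x = y then s.inr h.choose else s.inl (hsel y h).1

/-- Elementwise criterion for a pushout square in `Type`. -/
lemma isPushout_of_conditions {A B X Y : Type} (f : A ⟶ B) (u : A ⟶ X) (v : B ⟶ Y) (f' : X ⟶ Y)
    (comm : f ≫ v = u ≫ f')
    (hf' : Function.Injective f')
    (hv : ∀ b b' : B, b ∉ Set.range f → b' ∉ Set.range f → v b = v b' → b = b')
    (hd : ∀ b : B, b ∉ Set.range f → v b ∉ Set.range f')
    (hs : ∀ y : Y, y ∈ Set.range f' ∨ y ∈ Set.range v) :
    IsPushout f u v f' := by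
  classical
  refine IsPushout.of_isColimit' ⟨comm⟩ ?_
  have hsel : ∀ y : Y, ¬ (∃ x, f' x = y) → {b : B // v b = y ∧ b ∉ Set.range f} := by
    intro y hy
    have hyv : y ∈ Set.range v := (hs y).resolve_left hy
    refine ⟨hyv.choose, hyv.choose_spec, ?_⟩
    rintro ⟨a, ha⟩
    have h2 : v (f a) = f' (u a) := ConcreteCategory.congr_hom comm a
    exact hy ⟨u a, by rw [← h2, ha, hyv.choose_spec]⟩
  have hdesc_f' : ∀ (s : PushoutCocone f u) (x : X), poDesc u hsel s (f' x) = s.inr x := by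
    intro s x
    have h : ∃ x', f' x' = f' x := ⟨x, rfl⟩
    unfold poDesc
    rw [dif_pos h, hf' h.choose_spec]
  have hdesc_v : ∀ (s : PushoutCocone f u) (b : B), b ∉ Set.range f →
      poDesc u hsel s (v b) = s.inl b := by
    intro s b hb
    have h : ¬ ∃ x, f' x = v b := by
      intro hx
      exact hd b hb ⟨hx.choose, hx.choose_spec⟩
    unfold poDesc
    rw [dif_neg h]
    exact congrArg s.inl (hv _ _ (hsel (v b) h).2.2 hb (hsel (v b) h).2.1)
  apply PushoutCocone.IsColimit.mk _ (fun s => ↾(poDesc u hsel s))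
  · intro s
    ext b
    change poDesc u hsel s (v b) = s.inl b
    by_cases hb : b ∈ Set.range f
    · obtain ⟨a, rfl⟩ := hb
      have h1 : v (f a) = f' (u a) := ConcreteCategory.congr_hom comm a
      have h2 := ConcreteCategory.congr_hom s.condition a
      simp only [types_comp_apply] at h2
      rw [h1, hdesc_f']
      exact h2.symm
    · exact hdesc_v s b hb
  · intro s
    ext x
    change poDesc u hsel s (f' x) = s.inr x
    exact hdesc_f' s x
  · intro s mdesc h1 h2
    ext y
    change mdesc y = poDesc u hsel s y
    rcases hs y with ⟨x, rfl⟩ | ⟨b, rfl⟩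
    · rw [hdesc_f']
      exact ConcreteCategory.congr_hom h2 x
    · by_cases hb : b ∈ Set.range f
      · obtain ⟨a, rfl⟩ := hb
        have hva : v (f a) = f' (u a) := ConcreteCategory.congr_hom comm a
        rw [hva, hdesc_f']
        exact ConcreteCategory.congr_hom h2 (u a)
      · rw [hdesc_v s b hb]
        exact ConcreteCategory.congr_hom h1 b

/-- A levelwise pushout square of simplicial sets is a pushout square. -/
lemma isPushout_of_levelwise {A B X Y : SSet.{0}} (f : A ⟶ B) (u : A ⟶ X) (v : B ⟶ Y)
    (f' : X ⟶ Y) (comm : f ≫ v = u ≫ f')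
    (H : ∀ k : SimplexCategoryᵒᵖ, IsPushout (f.app k) (u.app k) (v.app k) (f'.app k)) :
    IsPushout f u v f' := by
  refine ⟨⟨comm⟩, ⟨evaluationJointlyReflectsColimits _ fun k => ?_⟩⟩
  refine (IsColimit.equivOfNatIsoOfIso
    (spanCompIso ((evaluation SimplexCategoryᵒᵖ (Type 0)).obj k) f u) _ _
    (WalkingSpan.ext ?_ ?_ ?_)).symm (H k).isColimit
  exacts [Iso.refl _, (Category.comp_id _).trans (Category.id_comp _).symm,
    (Category.comp_id _).trans (Category.id_comp _).symm]

section Coprod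

variable {ι : Type} (A : ι → SSet.{0})

/-- The canonical map from the sigma type to the values of a coproduct. -/
noncomputable def sigmaEl (k : SimplexCategoryᵒᵖ) (p : Σ w : ι, (A w).obj k) : (∐ A).obj k :=
  (Sigma.ι A p.1).app k p.2

lemma sigmaEl_bijective (k : SimplexCategoryᵒᵖ) : Function.Bijective (sigmaEl A k) := by
  have heq : sigmaEl A k = (fun (p : Σ w : ι, (A w).obj k) =>
      (sigmaComparison ((evaluation SimplexCategoryᵒᵖ (Type 0)).obj k) A)
        ((Types.coproductIso (fun w => (A w).obj k)).inv ⟨p.1, p.2⟩)) := by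
    funext p
    have h1 := ConcreteCategory.congr_hom (Types.coproductIso_mk_comp_inv (fun w => (A w).obj k) p.1) p.2
    have h1' : (Types.coproductIso fun w => (A w).obj k).inv ⟨p.1, p.2⟩
        = Sigma.ι (fun w => (A w).obj k) p.1 p.2 := h1
    rw [h1']
    have h2 := ConcreteCategory.congr_hom (ι_comp_sigmaComparison
      ((evaluation SimplexCategoryᵒᵖ (Type 0)).obj k) A p.1) p.2
    simp only [types_comp_apply] at h2
    exact h2.symm
  rw [heq]
  have hb1 : Function.Bijective ((Types.coproductIso (fun w => (A w).obj k)).inv) :=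
    (isIso_iff_bijective _).mp inferInstance
  have hb2 : Function.Bijective
      (sigmaComparison ((evaluation SimplexCategoryᵒᵖ (Type 0)).obj k) A) :=
    (isIso_iff_bijective _).mp inferInstance
  exact hb2.comp hb1

lemma sigmaEl_surj (k : SimplexCategoryᵒᵖ) (t : (∐ A).obj k) :
    ∃ p : Σ w : ι, (A w).obj k, sigmaEl A k p = t :=
  (sigmaEl_bijective A k).2 t

lemma sigmaEl_inj {k : SimplexCategoryᵒᵖ} {p q : Σ w : ι, (A w).obj k}
    (h : sigmaEl A k p = sigmaEl A k q) : p = q :=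
  (sigmaEl_bijective A k).1 h

lemma sigma_desc_app {T : SSet.{0}} (h : ∀ i, A i ⟶ T) (k : SimplexCategoryᵒᵖ)
    (p : Σ w : ι, (A w).obj k) :
    (Sigma.desc h).app k (sigmaEl A k p) = (h p.1).app k p.2 := by
  have := congrArg (fun (t : A p.1 ⟶ T) => t.app k p.2) (Sigma.ι_desc (f := A) h p.1)
  exact this

end Coprod

section Lifting

variable {C : Type*} [Category C]

lemma hlp_of_isPushout {A B X Y S T : C} {g : A ⟶ B} {u : A ⟶ X} {v : B ⟶ Y} {f' : X ⟶ Y}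
    (h : IsPushout g u v f') {p : S ⟶ T} (hg : HasLiftingProperty g p) :
    HasLiftingProperty f' p := by
  constructor
  intro top bot sq
  have sq2 : CommSq (u ≫ top) g p (v ≫ bot) := by
    constructor
    rw [Category.assoc, sq.w, ← Category.assoc, ← h.w, Category.assoc]
  haveI := hg
  constructor
  refine ⟨⟨h.desc sq2.lift top sq2.fac_left, h.inr_desc _ _ _, ?_⟩⟩
  apply h.hom_ext
  · rw [← Category.assoc, h.inl_desc, sq2.fac_right]
  · rw [← Category.assoc, h.inr_desc, sq.w]

end Lifting

lemma hlp_sigma {ι : Type} (A B : ι → SSet.{0}) (g : ∀ i, A i ⟶ B i) {S T : SSet.{0}}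
    (p : S ⟶ T) (h : ∀ i, HasLiftingProperty (g i) p) :
    HasLiftingProperty (Sigma.desc fun i => g i ≫ Sigma.ι B i) p := by
  constructor
  intro top bot sq
  have sqi : ∀ i, CommSq (Sigma.ι A i ≫ top) (g i) p (Sigma.ι B i ≫ bot) := by
    intro i
    constructor
    rw [Category.assoc, sq.w, ← Category.assoc, ← Category.assoc]
    congr 1
    simp
  constructor
  refine ⟨⟨Sigma.desc (fun i => (sqi i).lift), ?_, ?_⟩⟩
  · apply Sigma.hom_ext
    intro i
    rw [← Category.assoc, Sigma.ι_desc, Category.assoc, Sigma.ι_desc]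
    exact (sqi i).fac_left
  · apply Sigma.hom_ext
    intro i
    rw [← Category.assoc, Sigma.ι_desc, (sqi i).fac_right]

/-! ### The filtration of `IΔ^n` -/

/-- The `m`-th stage of the filtration of `IΔ^n`. -/
def filt (n m : ℕ) : Subfunctor (IDelta n) where
  obj k := {x | Monotone x ∨ wt x ≤ m}
  map := by
    intro k k' φ x hx
    rcases hx with h | h
    · exact Or.inl (h.comp φ.unop.toOrderHom.monotone)
    · exact Or.inr (le_trans (wt_comp_le x _ φ.unop.toOrderHom.monotone) h)

lemma filt_mono (n : ℕ) {a b : ℕ} (h : a ≤ b) : filt n a ≤ filt n b := by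
  intro k x hx
  rcases hx with h' | h'
  · exact Or.inl h'
  · exact Or.inr (le_trans h' h)

/-- Type-II words: the fillers of the horns attached at stage `m`. -/
def TII (n m : ℕ) : Type :=
  {w : Fin (m+1) → Fin (n+1) //
    w 0 = 0 ∧ (∀ j : Fin m, w j.castSucc ≠ w j.succ) ∧ ¬ Monotone w}

lemma TII_pos {n m : ℕ} (w : TII n m) : 0 < m := by
  by_contra h
  push_neg at h
  obtain rfl : m = 0 := by omega
  apply w.2.2.2
  intro a b hab
  have h1 := a.isLt
  have h2 := b.isLt
  have : a = b := Fin.ext (by omega)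
  rw [this]

lemma TII_full_id {n m : ℕ} (w : TII n m) :
    ∀ j : Fin (m+1), j ≠ 0 → ∃ a : Fin (m+1), (id : Fin (m+1) → Fin (m+1)) a = j :=
  fun j _ => ⟨j, rfl⟩

lemma TII_wt {n m : ℕ} (w : TII n m) : wt w.1 = m := by
  have := full_wt (n := n) (g := (id : Fin (m+1) → Fin (m+1))) (TII_pos w) w.2.1 w.2.2.1
    monotone_id (TII_full_id w)
  rwa [Function.comp_id] at this

/-- Attaching map for the top cell. -/
def attachTop {n m : ℕ} (w : TII n m) : (Δ[m] : SSet.{0}) ⟶ (filt n m).toFunctor where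
  app k := ↾fun α => ⟨w.1 ∘ ⇑(stdSimplex.asOrderHom α), Or.inr
    ((wt_comp_le w.1 _ (stdSimplex.asOrderHom α).monotone).trans (le_of_eq (TII_wt w)))⟩
  naturality k k' φ := by
    ext α
    apply Subtype.ext
    rfl

/-- Attaching map for the horn. -/
def attachHorn {n m : ℕ} (w : TII n (m+2)) :
    (Λ[m+2, 0] : SSet.{0}) ⟶ (filt n (m+1)).toFunctor where
  app k := ↾fun α => ⟨w.1 ∘ ⇑(stdSimplex.asOrderHom α.1), Or.inr (by
    obtain ⟨j₀, hj₀⟩ := (Set.ne_univ_iff_exists_notMem _).mp α.2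
    simp only [Set.mem_union, Set.mem_singleton_iff, not_or] at hj₀
    have := horn_wt_bound w.1 w.2.1 (⇑(stdSimplex.asOrderHom α.1)) (stdSimplex.asOrderHom α.1).monotone j₀
      hj₀.2 hj₀.1
    omega)⟩
  naturality k k' φ := by
    ext α
    apply Subtype.ext
    rfl

/-- The inclusion of one filtration stage into the next. -/
def stepHom (n m : ℕ) : ((filt n (m+1)).toFunctor : SSet.{0}) ⟶ (filt n (m+2)).toFunctor :=
  Subfunctor.homOfLe (filt_mono n (by omega))

lemma attach_sq {n m : ℕ} (w : TII n (m+2)) :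
    (horn (m+2) 0).ι ≫ attachTop w = attachHorn w ≫ stepHom n m := by
  apply SSet.hom_ext
  intro k
  ext α
  apply Subtype.ext
  rfl

lemma stage_pushout (n m : ℕ) : IsPushoutOfCoproductOf LeftHornClass (stepHom n m) := by
  refine ⟨TII n (m+2), (fun _ => Λ[m+2, 0]), (fun _ => Δ[m+2]),
    (fun _ => (horn (m+2) 0).ι),
    fun _ => ⟨m+2, by omega, ⟨Iso.refl _⟩⟩,
    Sigma.desc (fun w => attachHorn w), Sigma.desc (fun w => attachTop w), ?_⟩
  have comm : (Sigma.desc fun w : TII n (m+2) =>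
        (horn (m+2) 0).ι ≫ Sigma.ι (fun _ : TII n (m+2) => (Δ[m+2] : SSet.{0})) w) ≫
        Sigma.desc (fun w => attachTop w)
      = Sigma.desc (fun w => attachHorn w) ≫ stepHom n m := by
    apply Sigma.hom_ext
    intro w
    simp only [colimit.ι_desc_assoc, colimit.ι_desc, Cofan.mk_ι_app]
    rw [Category.assoc, Sigma.ι_desc]
    exact attach_sq w
  apply isPushout_of_levelwise _ _ _ _ comm
  intro k
  -- the characterization of the range of the horn coproduct map
  have hrangeF : ∀ (p : Σ w : TII n (m+2), (Δ[m+2] : SSet.{0}).obj k),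
      sigmaEl _ k p ∈ Set.range ((Sigma.desc fun w : TII n (m+2) =>
        (horn (m+2) 0).ι ≫ Sigma.ι (fun _ : TII n (m+2) => (Δ[m+2] : SSet.{0})) w).app k)
      ↔ (Set.range ⇑(stdSimplex.asOrderHom p.2) ∪ {0} ≠ Set.univ) := by
    intro p
    constructor
    · rintro ⟨t, ht⟩
      obtain ⟨q, rfl⟩ := sigmaEl_surj _ k t
      have he : (Sigma.desc fun w : TII n (m+2) =>
          (horn (m+2) 0).ι ≫ Sigma.ι (fun _ : TII n (m+2) => (Δ[m+2] : SSet.{0})) w).app k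
            (sigmaEl _ k q)
          = sigmaEl (fun _ : TII n (m+2) => (Δ[m+2] : SSet.{0})) k ⟨q.1, q.2.1⟩ := by
        rw [sigma_desc_app]
        rfl
      rw [he] at ht
      have hpq := sigmaEl_inj _ ht
      obtain ⟨w, α⟩ := p
      obtain ⟨w', β⟩ := q
      injection hpq with h1 h2
      subst h1
      rw [← h2]
      exact β.2
    · intro hα
      refine ⟨sigmaEl (fun _ : TII n (m+2) => (Λ[m+2, 0] : SSet.{0})) k ⟨p.1, ⟨p.2, hα⟩⟩, ?_⟩
      rw [sigma_desc_app]
      rfl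
  -- full-range condition for non-horn simplices
  have hfullOf : ∀ (p : Σ w : TII n (m+2), (Δ[m+2] : SSet.{0}).obj k),
      sigmaEl _ k p ∉ Set.range ((Sigma.desc fun w : TII n (m+2) =>
        (horn (m+2) 0).ι ≫ Sigma.ι (fun _ : TII n (m+2) => (Δ[m+2] : SSet.{0})) w).app k) →
      ∀ j : Fin (m+3), j ≠ 0 → ∃ a, ⇑(stdSimplex.asOrderHom p.2) a = j := by
    intro p hp j hj
    have huniv : Set.range ⇑(stdSimplex.asOrderHom p.2) ∪ {0} = Set.univ :=
      not_not.mp ((hrangeF p).not.mp hp)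
    have : j ∈ Set.range ⇑(stdSimplex.asOrderHom p.2) ∪ {0} := huniv ▸ Set.mem_univ j
    rcases this with h | h
    · exact h
    · exact absurd h hj
  apply isPushout_of_conditions
  · exact congrArg (fun (t : _ ⟶ (filt n (m+2)).toFunctor) => t.app k) comm
  · intro a b hab
    have hval : ((stepHom n m).app k a).1 = ((stepHom n m).app k b).1 :=
      congrArg Subtype.val hab
    exact Subtype.ext hval
  · intro b b' hb hb' hvb
    obtain ⟨p, rfl⟩ := sigmaEl_surj _ k b
    obtain ⟨q, rfl⟩ := sigmaEl_surj _ k b'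
    apply congrArg (sigmaEl _ k)
    have hfullp := hfullOf p hb
    have hfullq := hfullOf q hb'
    rw [sigma_desc_app, sigma_desc_app] at hvb
    have hval : p.1.1 ∘ ⇑(stdSimplex.asOrderHom p.2) = q.1.1 ∘ ⇑(stdSimplex.asOrderHom q.2) :=
      congrArg Subtype.val hvb
    have huniq := full_unique (by omega : 0 < m+2) p.1.2.1 p.1.2.2.1
      (stdSimplex.asOrderHom p.2).monotone hfullp q.1.2.1 q.1.2.2.1
      (stdSimplex.asOrderHom q.2).monotone hfullq hval
    obtain ⟨w, α⟩ := p
    obtain ⟨w', α'⟩ := q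
    obtain ⟨hw, hg⟩ := huniq
    have hww : w = w' := Subtype.ext hw
    subst hww
    have hαα : α = α' := by
      apply stdSimplex.objEquiv.injective
      apply SimplexCategory.Hom.ext
      exact DFunLike.coe_injective hg
    rw [hαα]
  · intro b hb
    obtain ⟨p, rfl⟩ := sigmaEl_surj _ k b
    have hfullp := hfullOf p hb
    rintro ⟨⟨x, hx⟩, hxe⟩
    rw [sigma_desc_app] at hxe
    have hval : x = p.1.1 ∘ ⇑(stdSimplex.asOrderHom p.2) := congrArg Subtype.val hxe
    rcases hx with hmono | hwt
    · rw [hval] at hmono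
      exact full_not_mono p.1.2.1 p.1.2.2.2 (stdSimplex.asOrderHom p.2).monotone hfullp hmono
    · rw [hval] at hwt
      have := full_wt (by omega : 0 < m+2) p.1.2.1 p.1.2.2.1
        (stdSimplex.asOrderHom p.2).monotone hfullp
      omega
  · rintro ⟨x, hx⟩
    by_cases hxm : Monotone x
    · exact Or.inl ⟨⟨x, Or.inl hxm⟩, Subtype.ext rfl⟩
    · rcases hx with h | h
      · exact absurd h hxm
      rcases Nat.lt_or_ge (wt x) (m+2) with h2 | h2
      · exact Or.inl ⟨⟨x, Or.inr (by omega)⟩, Subtype.ext rfl⟩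
      · have hwtx : wt x = m + 2 := by omega
        obtain ⟨w, g, hw0, hred, hwm, hgmono, hfull, hcomp⟩ :=
          exists_decomposition (by omega : 0 < m+2) x hxm hwtx
        refine Or.inr ⟨sigmaEl (fun _ : TII n (m+2) => (Δ[m+2] : SSet.{0})) k
          ⟨⟨w, hw0, hred, hwm⟩, stdSimplex.objMk ⟨g, hgmono⟩⟩, ?_⟩
        rw [sigma_desc_app]
        apply Subtype.ext
        exact hcomp

/-! ### The colimit presentation of `IΔ^n` -/

/-- The filtration functor. -/
def cellF (n : ℕ) : ℕ ⥤ SSet.{0} where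
  obj m := (filt n (m+1)).toFunctor
  map {a b} h := Subfunctor.homOfLe (filt_mono n (by have := leOfHom h; omega))
  map_id := fun a => rfl
  map_comp := fun f g => rfl

/-- The canonical cocone on the filtration functor with apex `IΔ^n`. -/
def cellCocone (n : ℕ) : Cocone (cellF n) where
  pt := IDelta n
  ι :=
    { app := fun m => Subfunctor.ι _
      naturality := fun a b h => rfl }

lemma stage_eq {n : ℕ} (s : Cocone (cellF n)) {a b : ℕ} (h : a ≤ b) (k : SimplexCategoryᵒᵖ)
    (x : (IDelta n).obj k) (hx : x ∈ (filt n (a+1)).obj k) :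
    (s.ι.app a).app k (⟨x, hx⟩ : (filt n (a+1)).toFunctor.obj k)
      = (s.ι.app b).app k (⟨x, filt_mono n (by omega : a + 1 ≤ b + 1) k hx⟩ :
        (filt n (b+1)).toFunctor.obj k) := by
  have h1 := s.ι.naturality (homOfLE h)
  simp only [Functor.const_obj_map, Category.comp_id] at h1
  exact ConcreteCategory.congr_hom (congrArg (fun (t : (cellF n).obj a ⟶ s.pt) => t.app k) h1.symm)
    (⟨x, hx⟩ : (filt n (a+1)).toFunctor.obj k)

/-- The canonical cocone is a colimit cocone. -/
noncomputable def cellIsColimit (n : ℕ) : IsColimit (cellCocone n) where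
  desc s :=
    { app := fun k => ↾fun x => (s.ι.app (wt x)).app k
        (⟨x, Or.inr (Nat.le_succ _)⟩ : (filt n (wt x + 1)).toFunctor.obj k)
      naturality := fun k k' φ => by
        ext x
        have hle : wt ((IDelta n).map φ x) ≤ wt x := wt_comp_le x _ φ.unop.toOrderHom.monotone
        have e1 := stage_eq s hle k' ((IDelta n).map φ x) (Or.inr (Nat.le_succ _))
        have e2 := ConcreteCategory.congr_hom ((s.ι.app (wt x)).naturality φ)
          (⟨x, Or.inr (Nat.le_succ _)⟩ : (filt n (wt x + 1)).toFunctor.obj k)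
        exact e1.trans e2 }
  fac s m := by
    apply SSet.hom_ext
    intro k
    ext x
    obtain ⟨x, hx⟩ := x
    have e1 := stage_eq s (le_max_left (wt x) m) k x (Or.inr (Nat.le_succ _))
    have e2 := stage_eq s (le_max_right (wt x) m) k x hx
    exact e1.trans e2.symm
  uniq s mdesc hm := by
    apply SSet.hom_ext
    intro k
    ext x
    exact ConcreteCategory.congr_hom
      (congrArg (fun (t : (cellF n).obj (wt x) ⟶ s.pt) => t.app k) (hm (wt x)))
      (⟨x, Or.inr (Nat.le_succ _)⟩ : (filt n (wt x + 1)).toFunctor.obj k)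

lemma monotone_of_wt_le_one {n k : ℕ} (x : Fin (k+1) → Fin (n+1)) (h : wt x ≤ 1) :
    Monotone x := by
  apply monotone_of_steps
  intro j
  by_cases hch : x j.castSucc = x j.succ
  · exact le_of_eq hch
  · have hj_mem : j ∈ Finset.univ.filter (fun j : Fin k => x j.castSucc ≠ x j.succ) := by
      simp only [Finset.mem_filter, Finset.mem_univ, true_and]
      exact hch
    have hn1 : 0 < nchg x := Finset.card_pos.mpr ⟨j, hj_mem⟩
    have hpen : pen x = 0 := by
      have := pen_le_one x
      unfold wt at h
      omega
    have hx0 : x 0 = 0 := by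
      by_contra hc
      simp [pen, hc] at hpen
    have hcs := cc_succ x j
    rw [if_pos hch] at hcs
    have hle := cc_le_nchg x j.succ
    have hnchg : nchg x ≤ 1 := by unfold wt at h; omega
    have hcc0 : cc x j.castSucc = 0 := by omega
    have hx : x j.castSucc = x 0 :=
      (eq_of_cc_eq x (Fin.zero_le _) (by rw [cc_zero, hcc0])).symm
    rw [hx, hx0]
    exact Fin.zero_le _

/-- The first stage of the filtration is `Δ[n]`. -/
noncomputable def filtOneIso (n : ℕ) : (((filt n 1).toFunctor : SSet.{0})) ≅ Δ[n] where
  hom :=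
    { app := fun k => ↾fun x => stdSimplex.objMk
        ⟨x.1, x.2.elim id (monotone_of_wt_le_one x.1)⟩
      naturality := fun k k' φ => by
        ext x
        rfl }
  inv :=
    { app := fun k => ↾fun α => ⟨⇑(stdSimplex.asOrderHom α), Or.inl (stdSimplex.asOrderHom α).monotone⟩
      naturality := fun k k' φ => by
        ext α
        apply Subtype.ext
        rfl }
  hom_inv_id := by
    apply SSet.hom_ext
    intro k
    ext x
    apply Subtype.ext
    rfl
  inv_hom_id := by
    apply SSet.hom_ext
    intro k
    ext α
    apply stdSimplex.objEquiv.injective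
    apply SimplexCategory.Hom.ext
    exact DFunLike.coe_injective rfl

lemma iDelta_factor (n : ℕ) :
    iDeltaIncl n = (filtOneIso n).inv ≫ (cellCocone n).ι.app 0 ≫ (Iso.refl (IDelta n)).hom := by
  apply SSet.hom_ext
  intro k
  ext α
  rfl

lemma iDelta_cellular (n : ℕ) : IsCellularIn LeftHornClass (iDeltaIncl n) := by
  refine ⟨cellF n, cellCocone n, cellIsColimit n, filtOneIso n, Iso.refl _, ?_, iDelta_factor n⟩
  intro m
  exact stage_pushout n m

/-! ### Lifting along the cellular presentation -/

/-- A compatible sequence of lifts along the filtration. -/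
noncomputable def liftSeq (F : ℕ ⥤ SSet.{0}) (c : Cocone F) {S T : SSet.{0}} (p : S ⟶ T)
    (h : ∀ m : ℕ, HasLiftingProperty (F.map (homOfLE (Nat.le_succ m))) p)
    (top : F.obj 0 ⟶ S) (bot : c.pt ⟶ T) (htop : top ≫ p = c.ι.app 0 ≫ bot) :
    ∀ j : ℕ, {l : F.obj j ⟶ S // l ≫ p = c.ι.app j ≫ bot} := fun j =>
  match j with
  | 0 => ⟨top, htop⟩
  | (j+1) =>
    haveI := h j
    ⟨(CommSq.mk (by rw [(liftSeq F c p h top bot htop j).2,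
        ← c.w (homOfLE (Nat.le_succ j)), Category.assoc] :
        (liftSeq F c p h top bot htop j).1 ≫ p
          = F.map (homOfLE (Nat.le_succ j)) ≫ c.ι.app (j+1) ≫ bot)).lift,
      by rw [CommSq.fac_right]⟩

lemma liftSeq_step (F : ℕ ⥤ SSet.{0}) (c : Cocone F) {S T : SSet.{0}} (p : S ⟶ T)
    (h : ∀ m : ℕ, HasLiftingProperty (F.map (homOfLE (Nat.le_succ m))) p)
    (top : F.obj 0 ⟶ S) (bot : c.pt ⟶ T) (htop : top ≫ p = c.ι.app 0 ≫ bot) (j : ℕ) :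
    F.map (homOfLE (Nat.le_succ j)) ≫ (liftSeq F c p h top bot htop (j+1)).1
      = (liftSeq F c p h top bot htop j).1 := by
  haveI := h j
  exact CommSq.fac_left _

lemma hlp_colimit (F : ℕ ⥤ SSet.{0}) (c : Cocone F) (hc : IsColimit c) {S T : SSet.{0}}
    (p : S ⟶ T) (h : ∀ m : ℕ, HasLiftingProperty (F.map (homOfLE (Nat.le_succ m))) p) :
    HasLiftingProperty (c.ι.app 0) p := by
  constructor
  intro top bot sq
  have hcompat : ∀ (a b : ℕ) (hab : a ≤ b),
      F.map (homOfLE hab) ≫ (liftSeq F c p h top bot sq.w b).1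
        = (liftSeq F c p h top bot sq.w a).1 := by
    intro a b hab
    induction b, hab using Nat.le_induction with
    | base =>
      have : homOfLE (le_refl a) = 𝟙 a := rfl
      rw [this, CategoryTheory.Functor.map_id, Category.id_comp]
    | succ b hab ih =>
      have hsplit : (homOfLE (Nat.le_succ_of_le hab) : a ⟶ b + 1)
          = homOfLE hab ≫ homOfLE (Nat.le_succ b) := rfl
      rw [hsplit, Functor.map_comp, Category.assoc, liftSeq_step, ih]
  let cS : Cocone F :=
    { pt := S
      ι :=
        { app := fun j => (liftSeq F c p h top bot sq.w j).1
          naturality := fun a b f => by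
            simp only [Functor.const_obj_map, Category.comp_id]
            exact hcompat a b (leOfHom f) } }
  constructor
  refine ⟨⟨hc.desc cS, hc.fac cS 0, ?_⟩⟩
  apply hc.hom_ext
  intro j
  rw [← Category.assoc, hc.fac cS j]
  exact (liftSeq F c p h top bot sq.w j).2

/-- Cellular maps lie in the saturation. -/
lemma saturation_of_cellular {X Y : SSet.{0}} {f : X ⟶ Y}
    (h : IsCellularIn LeftHornClass f) : saturationOf LeftHornClass f := by
  obtain ⟨F, c, hc, e0, e, hstep, heq⟩ := h
  intro S T p hp
  have hstage : ∀ m : ℕ, HasLiftingProperty (F.map (homOfLE (Nat.le_succ m))) p := by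
    intro m
    obtain ⟨ι', A, B, g, hlh, u, v, hpo⟩ := hstep m
    exact hlp_of_isPushout hpo (hlp_sigma A B g p (fun i => hp (g i) (hlh i)))
  haveI h0 : HasLiftingProperty (c.ι.app 0) p := hlp_colimit F c hc p hstage
  rw [heq]
  infer_instance

end Cellular

/-- For every `n ≥ 1`, the canonical inclusion `Δ[n] → IΔ^n` is cellular with
respect to the set of left horn inclusions `Λ[m,0] → Δ[m]`, `m ≥ 2`; in particular it lies in
the weakly saturated class generated by the left horn inclusions. -/
theorem iDeltaIncl_cellular (n : ℕ) (hn : 1 ≤ n) :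
    IsCellularIn LeftHornClass (iDeltaIncl n) ∧ saturationOf LeftHornClass (iDeltaIncl n) :=
  ⟨Cellular.iDelta_cellular n, Cellular.saturation_of_cellular (Cellular.iDelta_cellular n)⟩

end BousfieldPaper
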